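/- The 4-fan (the graph obtained from the path P_5 = v_1 v_2 v_3 v_4 v_5 by adding a universal vertex z adjacent to all v_i) is not the intersection graph of any non-crossing family of subtrees of any tree. More precisely: suppose for each vertex u of the 4-fan we have a subtree T_u of a tree T such that two vertices are adjacent iff their subtrees intersect, and the family is non-crossing; then a contradiction follows, using the fact (which may be assumed) that for the induced claw on {v_1, v_3, v_5, z}, there is a node x of T of degree at least 3 in T_z such that T_{v_1}, T_{v_3}, T_{v_5} each intersect T_z in a different branch of T with respect to x. -/

import Mathlib

/-- A vertex subset is connected if it induces a connected subgraph
(the empty set counts as connected). -/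
def ConnSub {β : Type*} (G : SimpleGraph β) (S : Set β) : Prop :=
  S.Nonempty → (G.induce S).Connected

/-- The 4-fan: path `v₁ v₂ v₃ v₄ v₅` (indices `0,…,4`) plus a universal vertex
`z` (index `5`). -/
def Fan : SimpleGraph (Fin 6) :=
  SimpleGraph.fromRel (fun a b => (b.val = a.val + 1 ∧ b.val ≤ 4) ∨ (a.val = 5 ∧ b.val ≠ 5))

lemma connsub_union {β : Type*} {G : SimpleGraph β} {S U : Set β}
    (hS : ConnSub G S) (hU : ConnSub G U) (h : (S ∩ U).Nonempty) :
    ConnSub G (S ∪ U) := fun _ =>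
  SimpleGraph.induce_union_connected (hS ⟨h.choose, h.choose_spec.1⟩).preconnected
    (hU ⟨h.choose, h.choose_spec.2⟩).preconnected h

/-- The 4-fan is not the intersection graph of any non-crossing family of
subtrees of a tree: given such a representation, together with the (assumable)
fact that for the induced claw `{v₁, v₃, v₅, z}` there is a node `x ∈ T_z` and
three pairwise distinct connected components `B 0, B 1, B 2` of `T - x` such
that `T_{v₁} ∩ T_z ⊆ B 0`, `T_{v₃} ∩ T_z ⊆ B 1`, `T_{v₅} ∩ T_z ⊆ B 2`,
a contradiction follows. -/
theorem fan_not_noncrossing_subtree_graph {N : Type*}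
    (T : SimpleGraph N) (hT : T.IsTree)
    (F : Fin 6 → Set N)
    (hne : ∀ v, (F v).Nonempty) (hconn : ∀ v, ConnSub T (F v))
    (hadj : ∀ u v : Fin 6, u ≠ v → (Fan.Adj u v ↔ (F u ∩ F v).Nonempty))
    (hnc : ∀ u v : Fin 6, ConnSub T (F u \ F v))
    (x : N) (hx : x ∈ F 5)
    (B : Fin 3 → Set N)
    (hBcomp : ∀ i, x ∉ B i ∧ ConnSub T (B i) ∧
      ∀ B' : Set N, B i ⊆ B' → x ∉ B' → ConnSub T B' → B' = B i)
    (hBdist : ∀ i j, i ≠ j → B i ≠ B j)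
    (h1 : F 0 ∩ F 5 ⊆ B 0) (h2 : F 2 ∩ F 5 ⊆ B 1) (h3 : F 4 ∩ F 5 ⊆ B 2) :
    False := by
  -- a connected set avoiding x that meets B i is contained in B i
  have key : ∀ (i : Fin 3) (S : Set N), ConnSub T S → x ∉ S → (S ∩ B i).Nonempty →
      S ⊆ B i := by
    intro i S hSc hxS hmeet
    obtain ⟨hxB, hBc, hmax⟩ := hBcomp i
    have hUc : ConnSub T (S ∪ B i) := connsub_union hSc hBc hmeet
    have := hmax (S ∪ B i) (Set.subset_union_right) (by
      rintro (h | h) <;> [exact hxS h; exact hxB h]) hUc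
    intro a ha
    rw [← this]; exact Or.inl ha
  -- adjacency facts
  have adj : ∀ u v : Fin 6, ((v.val = u.val + 1 ∧ v.val ≤ 4) ∨ (u.val = 5 ∧ v.val ≠ 5) ∨
      (u.val = v.val + 1 ∧ u.val ≤ 4) ∨ (v.val = 5 ∧ u.val ≠ 5)) → u ≠ v →
      (F u ∩ F v).Nonempty := by
    intro u v h hne'
    rw [← hadj u v hne']
    simp only [Fan, SimpleGraph.fromRel_adj]
    exact ⟨hne', by tauto⟩
  have m05 : (F 0 ∩ F 5).Nonempty := adj 0 5 (by decide) (by decide)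
  have m25 : (F 2 ∩ F 5).Nonempty := adj 2 5 (by decide) (by decide)
  have m45 : (F 4 ∩ F 5).Nonempty := adj 4 5 (by decide) (by decide)
  have m01 : (F 0 ∩ F 1).Nonempty := adj 0 1 (by decide) (by decide)
  have m12 : (F 1 ∩ F 2).Nonempty := adj 1 2 (by decide) (by decide)
  have m23 : (F 2 ∩ F 3).Nonempty := adj 2 3 (by decide) (by decide)
  have m34 : (F 3 ∩ F 4).Nonempty := adj 3 4 (by decide) (by decide)
  -- x ∉ F 0, F 2, F 4
  have hx0 : x ∉ F 0 := fun h => (hBcomp 0).1 (h1 ⟨h, hx⟩)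
  have hx2 : x ∉ F 2 := fun h => (hBcomp 1).1 (h2 ⟨h, hx⟩)
  have hx4 : x ∉ F 4 := fun h => (hBcomp 2).1 (h3 ⟨h, hx⟩)
  -- F 0 ⊆ B 0, F 2 ⊆ B 1, F 4 ⊆ B 2
  have hF0 : F 0 ⊆ B 0 := key 0 (F 0) (hconn 0) hx0
    ⟨m05.choose, m05.choose_spec.1, h1 m05.choose_spec⟩
  have hF2 : F 2 ⊆ B 1 := key 1 (F 2) (hconn 2) hx2
    ⟨m25.choose, m25.choose_spec.1, h2 m25.choose_spec⟩
  have hF4 : F 4 ⊆ B 2 := key 2 (F 4) (hconn 4) hx4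
    ⟨m45.choose, m45.choose_spec.1, h3 m45.choose_spec⟩
  -- distinct components are disjoint
  have disj : ∀ i j : Fin 3, i ≠ j → ∀ a, a ∈ B i → a ∈ B j → False := by
    intro i j hij a hai haj
    obtain ⟨hxi, hci, hmi⟩ := hBcomp i
    obtain ⟨hxj, hcj, hmj⟩ := hBcomp j
    have hU : ConnSub T (B i ∪ B j) := connsub_union hci hcj ⟨a, hai, haj⟩
    have hxU : x ∉ B i ∪ B j := by rintro (h | h) <;> [exact hxi h; exact hxj h]
    have hi := hmi (B i ∪ B j) Set.subset_union_left hxU hU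
    have hj := hmj (B i ∪ B j) Set.subset_union_right hxU hU
    exact hBdist i j hij (hi ▸ hj)
  -- if x ∉ F 1 then F 1 ⊆ B 0 and F 1 ⊆ B 1, impossible; so x ∈ F 1
  have xin : ∀ (k : Fin 6) (i j : Fin 3), i ≠ j →
      (F k ∩ F (k-1)).Nonempty → (F k ∩ F (k+1)).Nonempty →
      F (k-1) ⊆ B i → F (k+1) ⊆ B j → x ∈ F k := by
    intro k i j hij ml mr hl hr
    by_contra hxk
    have hki : F k ⊆ B i := key i (F k) (hconn k) hxk
      ⟨ml.choose, ml.choose_spec.1, hl ml.choose_spec.2⟩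
    have hkj : F k ⊆ B j := key j (F k) (hconn k) hxk
      ⟨mr.choose, mr.choose_spec.1, hr mr.choose_spec.2⟩
    obtain ⟨a, ha⟩ := hne k
    exact disj i j hij a (hki ha) (hkj ha)
  have x1 : x ∈ F 1 := xin 1 0 1 (by decide)
    (by simpa [Set.inter_comm] using m01) m12 hF0 hF2
  have x3 : x ∈ F 3 := xin 3 1 2 (by decide)
    (by simpa [Set.inter_comm] using m23) m34 hF2 hF4
  -- but v₂ and v₄ are non-adjacent
  have : Fan.Adj 1 3 := (hadj 1 3 (by decide)).2 ⟨x, x1, x3⟩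
  simp only [Fan, SimpleGraph.fromRel_adj] at this
  omega
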